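/- arXiv:1505.01972 — 4 statements merged into one kernel-verified Lean document; each statement's English description precedes it below -/
import Mathlib

section
/- For a contraction T on a complex Hilbert space H and λ in the open unit disk, the Poisson kernel K(T,λ) = (I - conj(λ)T)⁻¹ + (I - λT*)⁻¹ - I satisfies K(T,λ) = (I - λT*)⁻¹(I - |λ|²T*T)(I - conj(λ)T)⁻¹, and consequently ⟨K(T,λ)h, h⟩ ≥ 0 for all h ∈ H. -/
open ContinuousLinearMap

local notation "⟪" x ", " y "⟫" => @inner ℂ _ _ x y

/-- The operator Poisson kernel `K(T,λ) = (I - conj(λ)T)⁻¹ + (I - λT*)⁻¹ - I`. -/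
noncomputable def poissonKernelOp {H : Type*} [NormedAddCommGroup H] [InnerProductSpace ℂ H]
    [CompleteSpace H] (T : H →L[ℂ] H) (lam : ℂ) : H →L[ℂ] H :=
  Ring.inverse (1 - (starRingEnd ℂ lam) • T) + Ring.inverse (1 - lam • adjoint T) - 1

set_option maxHeartbeats 1600000 in
/-- the factorization of the Poisson kernel and its positivity. -/
theorem poissonKernel_factorization_and_pos {H : Type*} [NormedAddCommGroup H]
    [InnerProductSpace ℂ H] [CompleteSpace H] (T : H →L[ℂ] H) (hT : ‖T‖ ≤ 1)
    (lam : ℂ) (hlam : ‖lam‖ < 1) :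
    poissonKernelOp T lam =
      Ring.inverse (1 - lam • adjoint T) *
        ((1 : H →L[ℂ] H) - ((‖lam‖ : ℂ) ^ 2) • (adjoint T * T)) *
        Ring.inverse (1 - (starRingEnd ℂ lam) • T) ∧
    ∀ h : H, 0 ≤ Complex.re ⟪poissonKernelOp T lam h, h⟫ := by
  set c := starRingEnd ℂ lam with hc
  have hnormA : ‖c • T‖ < 1 := by
    calc ‖c • T‖ = ‖c‖ * ‖T‖ := norm_smul _ _
    _ ≤ ‖lam‖ * 1 := by
        apply mul_le_mul _ hT (norm_nonneg _) (norm_nonneg _)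
        simp [hc]
    _ < 1 := by simpa using hlam
  have hnormB : ‖lam • adjoint T‖ < 1 := by
    calc ‖lam • adjoint T‖ = ‖lam‖ * ‖adjoint T‖ := norm_smul _ _
    _ ≤ ‖lam‖ * 1 := by
        apply mul_le_mul le_rfl _ (norm_nonneg _) (norm_nonneg _)
        rw [← star_eq_adjoint, norm_star]; exact hT
    _ < 1 := by simpa using hlam
  set uA : (H →L[ℂ] H)ˣ := Units.oneSub _ hnormA with huA
  set uB : (H →L[ℂ] H)ˣ := Units.oneSub _ hnormB with huB
  have hAval : (uA : H →L[ℂ] H) = 1 - c • T := rfl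
  have hBval : (uB : H →L[ℂ] H) = 1 - lam • adjoint T := rfl
  set M : H →L[ℂ] H := (1 : H →L[ℂ] H) - ((‖lam‖ : ℂ) ^ 2) • (adjoint T * T) with hM
  have hinvA : Ring.inverse ((1 : H →L[ℂ] H) - c • T) = ↑uA⁻¹ := by
    rw [← hAval, Ring.inverse_unit]
  have hinvB : Ring.inverse ((1 : H →L[ℂ] H) - lam • adjoint T) = ↑uB⁻¹ := by
    rw [← hBval, Ring.inverse_unit]
  -- algebraic identity for the middle factor
  have hmid : (uB : H →L[ℂ] H) + ↑uA - ↑uB * ↑uA = M := by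
    rw [hAval, hBval, hM]
    rw [mul_sub, sub_mul, sub_mul, smul_mul_smul_comm]
    have : lam * c = ((‖lam‖ : ℂ) ^ 2) := by
      rw [hc, Complex.mul_conj']
    rw [this]
    simp [mul_one, one_mul]
  -- factorization
  have hK : poissonKernelOp T lam = ↑uB⁻¹ * M * ↑uA⁻¹ := by
    rw [← hmid]
    unfold poissonKernelOp
    rw [hinvA, hinvB]
    rw [mul_sub, mul_add, Units.inv_mul, Units.inv_mul_cancel_left, sub_mul, add_mul,
      one_mul, Units.mul_inv_cancel_right, Units.mul_inv]
  have hfact : poissonKernelOp T lam =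
      Ring.inverse (1 - lam • adjoint T) * M * Ring.inverse (1 - c • T) := by
    rw [hinvA, hinvB, hK]
  refine ⟨hfact, ?_⟩
  -- adjoint relation: star uA = uB, hence star of the inverse is uB⁻¹
  have hstarA : star ((uA : H →L[ℂ] H)) = ↑uB := by
    rw [hAval, hBval, star_sub, star_one, star_smul]
    simp [hc, star_eq_adjoint]
  have hstarinv : star ((↑uA⁻¹ : H →L[ℂ] H)) = ↑uB⁻¹ := by
    have h1 : star ((↑uA⁻¹ : H →L[ℂ] H)) * ↑uB = 1 := by
      rw [← hstarA, ← star_mul, Units.mul_inv, star_one]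
    calc star ((↑uA⁻¹ : H →L[ℂ] H)) = star (↑uA⁻¹ : H →L[ℂ] H) * (↑uB * ↑uB⁻¹) := by
          rw [Units.mul_inv, mul_one]
    _ = (star (↑uA⁻¹ : H →L[ℂ] H) * ↑uB) * ↑uB⁻¹ := by rw [mul_assoc]
    _ = ↑uB⁻¹ := by rw [h1, one_mul]
  intro h
  rw [hK]
  set g : H := (↑uA⁻¹ : H →L[ℂ] H) h with hg
  have key : ⟪(↑uB⁻¹ * M * ↑uA⁻¹ : H →L[ℂ] H) h, h⟫ = ⟪M g, g⟫ := by
    have : (↑uB⁻¹ * M * ↑uA⁻¹ : H →L[ℂ] H) h = (↑uB⁻¹ : H →L[ℂ] H) (M g) := rfl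
    rw [this, ← hstarinv, star_eq_adjoint, adjoint_inner_left]
  rw [key]
  have hMg : ⟪M g, g⟫ = ⟪g, g⟫ - ((‖lam‖ : ℂ) ^ 2) * ⟪T g, T g⟫ := by
    rw [hM]
    simp only [sub_apply, one_apply, ContinuousLinearMap.one_apply, smul_apply, ContinuousLinearMap.mul_apply,
      inner_sub_left, inner_smul_left, adjoint_inner_left,
      ← Complex.ofReal_pow, Complex.conj_ofReal]
  have h1 : Complex.re ⟪g, g⟫ = ‖g‖ ^ 2 := by
    rw [← RCLike.re_to_complex, inner_self_eq_norm_sq]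
  have h2 : Complex.re ⟪T g, T g⟫ = ‖T g‖ ^ 2 := by
    rw [← RCLike.re_to_complex, inner_self_eq_norm_sq]
  rw [hMg, Complex.sub_re, ← Complex.ofReal_pow, Complex.re_ofReal_mul, h1, h2]
  have hTg : ‖T g‖ ≤ ‖g‖ := by
    calc ‖T g‖ ≤ ‖T‖ * ‖g‖ := T.le_opNorm g
    _ ≤ 1 * ‖g‖ := mul_le_mul_of_nonneg_right hT (norm_nonneg _)
    _ = ‖g‖ := one_mul _
  have hl2 : ‖lam‖ ^ 2 ≤ 1 := by nlinarith [norm_nonneg lam]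
  have ht2 : ‖T g‖ ^ 2 ≤ ‖g‖ ^ 2 := by nlinarith [norm_nonneg (T g)]
  nlinarith [sq_nonneg ‖T g‖, sq_nonneg ‖g‖,
    mul_le_mul hl2 ht2 (sq_nonneg ‖T g‖) zero_le_one]
end

section
/- Let ν be a finite positive Borel measure on [0,2π] that is singular with respect to Lebesgue measure and ν ≠ 0. Then there is no constant C such that ν([t-ε, t+ε]) ≤ Cε for all t ∈ [0,2π] and all ε > 0 with t in the support of ν. Consequently, a singular unitary operator U (unitary whose spectral measure is singular with respect to Lebesgue measure) satisfies: if T is a contraction with ‖(I-λU)⁻¹(U-T)h‖² ≤ c/(1-|λ|²)·(‖h‖² - ‖Th‖²) for all λ ∈ 𝔻, h ∈ H, then T = U. -/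
open ContinuousLinearMap MeasureTheory Metric Filter Set Topology ENNReal

lemma key_density (ν : Measure ℝ) [IsFiniteMeasure ν] (hν0 : ν ≠ 0)
    (hsing : ν.MutuallySingular volume)
    (hsupp : ν (Set.Icc (0 : ℝ) (2 * Real.pi))ᶜ = 0) :
    ∃ t ∈ Set.Icc (0:ℝ) (2 * Real.pi),
      (∀ ε > (0:ℝ), ν (Set.Ioo (t - ε) (t + ε)) ≠ 0) ∧
      ∀ C : ℝ, ∀ ε0 > (0:ℝ), ∃ ε, 0 < ε ∧ ε < ε0 ∧
        C * ε < (ν (Set.Icc (t - ε) (t + ε))).toReal := by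
  set v := Besicovitch.vitaliFamily ν with hv
  have h1 : ∀ᵐ x ∂ν, Tendsto (fun a => volume a / ν a) (v.filterAt x) (𝓝 0) :=
    v.ae_eventually_measure_zero_of_singular hsing.symm
  have h2 : ∀ᵐ x ∂ν, x ∈ Set.Icc (0:ℝ) (2 * Real.pi) := by
    rw [MeasureTheory.ae_iff]
    exact hsupp
  have hne : (MeasureTheory.ae ν).NeBot := MeasureTheory.ae_neBot.mpr hν0
  obtain ⟨x, hx, hxIcc⟩ := (h1.and h2).exists
  have hx' : Tendsto (fun r => volume (closedBall x r) / ν (closedBall x r))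
      (𝓝[>] (0:ℝ)) (𝓝 0) := hx.comp (Besicovitch.tendsto_filterAt ν x)
  -- eventually statements
  have hsmall : ∀ δ : ℝ≥0∞, 0 < δ → ∀ᶠ r in 𝓝[>] (0:ℝ),
      volume (closedBall x r) / ν (closedBall x r) < δ := by
    intro δ hδ
    exact hx' (Iio_mem_nhds hδ)
  have hpos : ∀ᶠ r in 𝓝[>] (0:ℝ), ν (closedBall x r) ≠ 0 := by
    filter_upwards [hsmall 1 zero_lt_one, self_mem_nhdsWithin] with r hr hr0
    intro h0
    rw [h0, ENNReal.div_zero] at hr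
    · exact (lt_irrefl _ (hr.trans ENNReal.one_lt_top)).elim
    · rw [Real.volume_closedBall]
      simp only [ne_eq, ENNReal.ofReal_eq_zero, not_le]
      have := Set.mem_Ioi.mp hr0
      linarith
  refine ⟨x, hxIcc, ?_, ?_⟩
  · intro ε hε
    have hlt : ∀ᶠ r in 𝓝[>] (0:ℝ), r < ε :=
      Filter.Eventually.filter_mono nhdsWithin_le_nhds (eventually_lt_nhds hε)
    obtain ⟨r, hr1, hr2, hr3⟩ := (hpos.and (hlt.and self_mem_nhdsWithin)).exists
    intro h0
    apply hr1
    refine measure_mono_null ?_ h0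
    rw [Real.closedBall_eq_Icc]
    exact Set.Icc_subset_Ioo (by linarith [hr3]) (by linarith [hr3])
  · intro C ε0 hε0
    set C' : ℝ := max C 1 with hC'
    have hC'1 : (1:ℝ) ≤ C' := le_max_right _ _
    have hC'0 : (0:ℝ) < C' := lt_of_lt_of_le one_pos hC'1
    have hδ : (0:ℝ≥0∞) < ENNReal.ofReal (1 / (2 * C')) := by
      rw [ENNReal.ofReal_pos]; positivity
    have hlt : ∀ᶠ r in 𝓝[>] (0:ℝ), r < ε0 :=
      Filter.Eventually.filter_mono nhdsWithin_le_nhds (eventually_lt_nhds hε0)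
    obtain ⟨r, hr1, hr2, hr3, hr4⟩ :=
      ((hsmall _ hδ).and (hpos.and (hlt.and self_mem_nhdsWithin))).exists
    have hr0 : (0:ℝ) < r := hr4
    refine ⟨r, hr0, hr3, ?_⟩
    have hfin : ν (closedBall x r) ≠ ⊤ := measure_ne_top ν _
    rw [ENNReal.div_lt_iff (Or.inl hr2) (Or.inl hfin)] at hr1
    set m : ℝ := (ν (closedBall x r)).toReal with hm
    have hmeq : ν (closedBall x r) = ENNReal.ofReal m := (ENNReal.ofReal_toReal hfin).symm
    have hmpos : 0 < m := ENNReal.toReal_pos hr2 hfin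
    rw [Real.volume_closedBall, hmeq,
      ← ENNReal.ofReal_mul (le_of_lt (by have := hC'0; positivity))] at hr1
    have h2r : 2 * r < 1 / (2 * C') * m := by
      have := (ENNReal.ofReal_lt_ofReal_iff (by have := hC'0; positivity)).mp hr1
      linarith [this]
    rw [← Real.closedBall_eq_Icc, ← hm]
    have hCr : C * r ≤ C' * r := mul_le_mul_of_nonneg_right (le_max_left _ _) hr0.le
    rw [one_div_mul_eq_div, lt_div_iff₀ (by linarith)] at h2r
    nlinarith [mul_pos hC'0 hr0]

lemma normSq_est {ε t0 t : ℝ} (hε0 : 0 < ε) (hε1 : ε ≤ 1) (ht : |t - t0| ≤ ε) :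
    Complex.normSq (1 - ((1 - ε : ℝ) : ℂ) * Complex.exp (-Complex.I * t0) *
      Complex.exp (Complex.I * t)) ≤ 2 * ε ^ 2 := by
  obtain ⟨θ, hθ⟩ : ∃ θ : ℝ, t - t0 = θ := ⟨_, rfl⟩
  rw [hθ] at ht
  have h1 : Complex.exp (-Complex.I * t0) * Complex.exp (Complex.I * t)
      = Complex.exp ((θ : ℂ) * Complex.I) := by
    rw [← Complex.exp_add, ← hθ]
    congr 1
    push_cast
    ring
  have h2 : (1 : ℂ) - ((1 - ε : ℝ) : ℂ) * Complex.exp (-Complex.I * t0) *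
      Complex.exp (Complex.I * t)
      = ((1 - (1 - ε) * Real.cos θ : ℝ) : ℂ) + ((-(( 1 - ε) * Real.sin θ) : ℝ) : ℂ) * Complex.I := by
    rw [mul_assoc, h1, Complex.exp_mul_I]
    push_cast [Complex.ofReal_cos, Complex.ofReal_sin]
    ring
  rw [h2, Complex.normSq_add_mul_I]
  have hsq : Real.sin (θ / 2) ^ 2 ≤ (θ / 2) ^ 2 := Real.sin_sq_le_sq
  have hcos : Real.cos θ = 2 * Real.cos (θ / 2) ^ 2 - 1 := by
    have := Real.cos_two_mul (θ / 2)
    rw [mul_div_cancel₀] at this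
    · exact this
    · norm_num
  have hpyth : Real.sin (θ / 2) ^ 2 + Real.cos (θ / 2) ^ 2 = 1 := Real.sin_sq_add_cos_sq _
  have hpyth2 : Real.sin θ ^ 2 + Real.cos θ ^ 2 = 1 := Real.sin_sq_add_cos_sq _
  have hθε : θ ^ 2 ≤ ε ^ 2 := sq_le_sq' (by cases abs_le.mp ht; linarith) (abs_le.mp ht).2
  have hS : 0 ≤ Real.sin (θ / 2) ^ 2 := sq_nonneg _
  have hkey : (1 - (1 - ε) * Real.cos θ) ^ 2 + (-((1 - ε) * Real.sin θ)) ^ 2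
      = ε ^ 2 + 4 * (1 - ε) * Real.sin (θ / 2) ^ 2 := by
    linear_combination ((1 - ε) ^ 2) * hpyth2 - (2 * (1 - ε)) * hcos - (4 * (1 - ε)) * hpyth
  rw [hkey]
  have hq : (θ / 2) ^ 2 = θ ^ 2 / 4 := by ring
  have hεS : 0 ≤ ε * Real.sin (θ / 2) ^ 2 := mul_nonneg hε0.le hS
  nlinarith [hεS, hsq, hθε, hq, hS]

lemma norm_exp_I_mul (s : ℝ) : ‖Complex.exp (Complex.I * s)‖ = 1 := by
  rw [Complex.norm_exp]
  simp

lemma norm_exp_neg_I_mul (s : ℝ) : ‖Complex.exp (-Complex.I * s)‖ = 1 := by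
  rw [Complex.norm_exp]
  simp

/-- (a) a nonzero finite singular measure on `[0,2π]` admits no linear bound
`ν([t-ε,t+ε]) ≤ Cε` at points of its support; (b) consequently, if `U` is a singular
unitary (all its localized spectral measures `μ y` are singular w.r.t. Lebesgue measure)
and a contraction `T` satisfies the resolvent estimate
`‖(I-λU)⁻¹(U-T)h‖² ≤ c/(1-|λ|²)·(‖h‖²-‖Th‖²)`, then `T = U`. -/
theorem singular_unitary_maximal {H : Type*} [NormedAddCommGroup H]
    [InnerProductSpace ℂ H] [CompleteSpace H]
    (ν : Measure ℝ) [IsFiniteMeasure ν] (hν0 : ν ≠ 0)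
    (hνsing : ν.MutuallySingular volume)
    (hνsupp : ν (Set.Icc (0 : ℝ) (2 * Real.pi))ᶜ = 0)
    (U T : H →L[ℂ] H) (hUl : adjoint U * U = 1) (hUr : U * adjoint U = 1) (hT : ‖T‖ ≤ 1)
    (μ : H → Measure ℝ) [∀ y, IsFiniteMeasure (μ y)]
    (hspec : ∀ y : H, ∀ lam : ℂ, ‖lam‖ < 1 →
      ∫ t, (1 / Complex.normSq (1 - lam * Complex.exp (Complex.I * t))) ∂(μ y) =
        ‖Ring.inverse (1 - lam • U) y‖ ^ 2)
    (hμsupp : ∀ y : H, μ y (Set.Icc (0 : ℝ) (2 * Real.pi))ᶜ = 0)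
    (hμsing : ∀ y : H, (μ y).MutuallySingular volume)
    (c : ℝ) (hc : 0 < c)
    (hres : ∀ (lam : ℂ), ‖lam‖ < 1 → ∀ h : H,
      ‖Ring.inverse (1 - lam • U) ((U - T) h)‖ ^ 2 ≤
        c / (1 - ‖lam‖ ^ 2) * (‖h‖ ^ 2 - ‖T h‖ ^ 2)) :
    (¬ ∃ C : ℝ, ∀ t ∈ Set.Icc (0 : ℝ) (2 * Real.pi),
        (∀ ε > (0 : ℝ), ν (Set.Ioo (t - ε) (t + ε)) ≠ 0) →
        ∀ ε > (0 : ℝ), (ν (Set.Icc (t - ε) (t + ε))).toReal ≤ C * ε) ∧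
    T = U := by
  constructor
  · -- part (a)
    rintro ⟨C, hC⟩
    obtain ⟨t, htIcc, htsupp, htdens⟩ := key_density ν hν0 hνsing hνsupp
    obtain ⟨ε, hε0, hε1, hεlt⟩ := htdens C 1 one_pos
    have := hC t htIcc htsupp ε hε0
    linarith
  · -- part (b)
    ext h
    by_contra hne
    set y : H := (U - T) h with hy
    have hy0 : y ≠ 0 := by
      rw [hy]
      simp only [ContinuousLinearMap.sub_apply]
      exact sub_ne_zero.mpr (fun hh => hne hh.symm)
    -- μ y is nonzero
    have hμuniv : ((μ y) Set.univ).toReal = ‖y‖ ^ 2 := by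
      have h0 := hspec y 0 (by norm_num)
      simp [Complex.normSq_one] at h0
      exact h0
    have hμy0 : μ y ≠ 0 := by
      intro h0
      rw [h0] at hμuniv
      simp at hμuniv
      exact hy0 (norm_eq_zero.mp (by nlinarith [norm_nonneg y]))
    obtain ⟨t, htIcc, -, htdens⟩ := key_density (μ y) hμy0 (hμsing y) (hμsupp y)
    -- constants
    set K : ℝ := c * (‖h‖ ^ 2 - ‖T h‖ ^ 2) with hK
    have hTh : ‖T h‖ ≤ ‖h‖ := by
      calc ‖T h‖ ≤ ‖T‖ * ‖h‖ := T.le_opNorm h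
      _ ≤ 1 * ‖h‖ := mul_le_mul_of_nonneg_right hT (norm_nonneg _)
      _ = ‖h‖ := one_mul _
    have hK0 : 0 ≤ K := by
      rw [hK]
      apply mul_nonneg hc.le
      nlinarith [norm_nonneg (T h), norm_nonneg h]
    obtain ⟨ε, hε0, hε1, hεlt⟩ := htdens (2 * K + 1) 1 one_pos
    -- the linear bound on μ y at scale ε
    set lam : ℂ := ((1 - ε : ℝ) : ℂ) * Complex.exp (-Complex.I * t) with hlamdef
    have hlamnorm : ‖lam‖ = 1 - ε := by
      rw [hlamdef, norm_mul, norm_exp_neg_I_mul, mul_one, Complex.norm_real,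
        Real.norm_eq_abs, abs_of_nonneg (by linarith)]
    have hlam1 : ‖lam‖ < 1 := by rw [hlamnorm]; linarith
    -- the integrand
    set f : ℝ → ℝ := fun s => 1 / Complex.normSq (1 - lam * Complex.exp (Complex.I * s))
      with hfdef
    have hlow : ∀ s : ℝ, ε ^ 2 ≤ Complex.normSq (1 - lam * Complex.exp (Complex.I * s)) := by
      intro s
      have hn : ε ≤ ‖(1 : ℂ) - lam * Complex.exp (Complex.I * s)‖ := by
        have h1 : ‖lam * Complex.exp (Complex.I * s)‖ = 1 - ε := by
          rw [norm_mul, norm_exp_I_mul, mul_one, hlamnorm]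
        have := norm_sub_norm_le (1 : ℂ) (lam * Complex.exp (Complex.I * s))
        rw [h1, norm_one] at this
        linarith
      rw [Complex.normSq_eq_norm_sq]
      exact pow_le_pow_left₀ hε0.le hn 2
    have hnpos : ∀ s : ℝ, 0 < Complex.normSq (1 - lam * Complex.exp (Complex.I * s)) :=
      fun s => lt_of_lt_of_le (by positivity) (hlow s)
    have hfpos : ∀ s : ℝ, 0 < f s := fun s => by
      rw [hfdef]; exact div_pos one_pos (hnpos s)
    have hfcont : Continuous f := by
      apply Continuous.div continuous_const
      · exact Complex.continuous_normSq.comp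
          (continuous_const.sub (continuous_const.mul
            (Complex.continuous_exp.comp (continuous_const.mul Complex.continuous_ofReal))))
      · exact fun s => (hnpos s).ne'
    have hfint : Integrable f (μ y) := by
      refine Integrable.mono' (integrable_const (1 / ε ^ 2)) hfcont.aestronglyMeasurable ?_
      refine ae_of_all _ fun s => ?_
      rw [Real.norm_eq_abs, abs_of_pos (hfpos s), hfdef]
      exact one_div_le_one_div_of_le (by positivity) (hlow s)
    -- pointwise lower bound on the interval
    have hIccb : ∀ s ∈ Set.Icc (t - ε) (t + ε), 1 / (2 * ε ^ 2) ≤ f s := by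
      intro s hs
      have habs : |s - t| ≤ ε := by
        rw [abs_le]
        exact ⟨by linarith [hs.1], by linarith [hs.2]⟩
      have hest := normSq_est hε0 hε1.le habs
      rw [hfdef]
      exact one_div_le_one_div_of_le (hnpos s) (by rw [hlamdef]; exact hest)
    -- assemble the chain
    have hconst : ∫ _ in Set.Icc (t - ε) (t + ε), (1 / (2 * ε ^ 2)) ∂(μ y)
        = ((μ y) (Set.Icc (t - ε) (t + ε))).toReal * (1 / (2 * ε ^ 2)) := by
      rw [setIntegral_const]; rfl
    have hmono : ∫ s in Set.Icc (t - ε) (t + ε), (1 / (2 * ε ^ 2)) ∂(μ y)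
        ≤ ∫ s in Set.Icc (t - ε) (t + ε), f s ∂(μ y) :=
      setIntegral_mono_on (integrable_const _).integrableOn hfint.integrableOn
        measurableSet_Icc hIccb
    have hsub : ∫ s in Set.Icc (t - ε) (t + ε), f s ∂(μ y) ≤ ∫ s, f s ∂(μ y) :=
      setIntegral_le_integral hfint (ae_of_all _ fun s => (hfpos s).le)
    have hval : ∫ s, f s ∂(μ y) ≤ K / ε := by
      have hs := hspec y lam hlam1
      have hr := hres lam hlam1 h
      rw [← hy] at hr
      rw [hfdef]
      rw [hs]
      refine le_trans hr ?_
      rw [hlamnorm]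
      have hden : 1 - (1 - ε) ^ 2 = ε * (2 - ε) := by ring
      have h1 : c / (1 - (1 - ε) ^ 2) * (‖h‖ ^ 2 - ‖T h‖ ^ 2) = K / (ε * (2 - ε)) := by
        rw [hden, hK]; ring
      rw [h1]
      apply div_le_div_of_nonneg_left hK0 hε0
      nlinarith
    have hfinal : ((μ y) (Set.Icc (t - ε) (t + ε))).toReal ≤ 2 * K * ε := by
      have hchain : ((μ y) (Set.Icc (t - ε) (t + ε))).toReal * (1 / (2 * ε ^ 2)) ≤ K / ε := by
        rw [← hconst]
        exact le_trans hmono (le_trans hsub hval)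
      have hp : (0:ℝ) < 2 * ε ^ 2 := by positivity
      have h2 : ((μ y) (Set.Icc (t - ε) (t + ε))).toReal ≤ (K / ε) * (2 * ε ^ 2) := by
        calc ((μ y) (Set.Icc (t - ε) (t + ε))).toReal
            = (((μ y) (Set.Icc (t - ε) (t + ε))).toReal * (1 / (2 * ε ^ 2))) * (2 * ε ^ 2) := by
              field_simp
        _ ≤ (K / ε) * (2 * ε ^ 2) := mul_le_mul_of_nonneg_right hchain hp.le
      calc _ ≤ (K / ε) * (2 * ε ^ 2) := h2
      _ = 2 * K * ε := by field_simp
    linarith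
end

section
/- Let T, T' be contractions on H such that Tⁿ is Z-dominated by T'ⁿ with a uniform constant c for every n ≥ 1, i.e., ‖(Tⁿ - T'ⁿ)h‖² + ‖D_{Tⁿ}h‖² ≤ c²‖D_{T'ⁿ}h‖² for all h. Then for all h ∈ H: (1/4)|⟨(S_T - S_{T'})h, h⟩|² · ‖h‖^{-2} ≤ c²⟨(I - S_{T'})h, h⟩ when ‖h‖ = 1, and more precisely | ‖S_T^{1/2}h‖ - ‖S_{T'}^{1/2}h‖ |² + ‖(I - S_T)^{1/2}h‖² ≤ c² ‖(I - S_{T'})^{1/2}h‖². -/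
open ContinuousLinearMap Filter

local notation "⟪" x ", " y "⟫" => @inner ℂ _ _ x y

lemma my_aux {H : Type*} [NormedAddCommGroup H] [InnerProductSpace ℂ H] [CompleteSpace H]
    (T : H →L[ℂ] H) (hT : ‖T‖ ≤ 1) (S : H →L[ℂ] H)
    (hS : ∀ h : H, Tendsto (fun n : ℕ => ((adjoint T) ^ n * T ^ n) h) atTop (nhds (S h)))
    (h : H) :
    Tendsto (fun n : ℕ => (‖(T ^ n) h‖ ^ 2 : ℝ)) atTop (nhds (Complex.re ⟪S h, h⟫)) ∧
      ⟪S h, h⟫ = ((Complex.re ⟪S h, h⟫ : ℝ) : ℂ) ∧ 0 ≤ Complex.re ⟪S h, h⟫ ∧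
      Complex.re ⟪S h, h⟫ ≤ ‖h‖ ^ 2 := by
  have hbd : ∀ n : ℕ, ‖(T ^ n) h‖ ≤ ‖h‖ := by
    intro n
    induction n with
    | zero => simp
    | succ n ih =>
      rw [pow_succ', mul_apply_eq_comp]
      calc ‖T ((T ^ n) h)‖ ≤ ‖T‖ * ‖(T ^ n) h‖ := T.le_opNorm _
        _ ≤ 1 * ‖h‖ := by
            apply mul_le_mul hT ih (norm_nonneg _) zero_le_one
        _ = ‖h‖ := one_mul _
  have hanti : Antitone (fun n : ℕ => (‖(T ^ n) h‖ ^ 2 : ℝ)) := by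
    apply antitone_nat_of_succ_le
    intro n
    apply pow_le_pow_left₀ (norm_nonneg _)
    rw [pow_succ', mul_apply_eq_comp]
    calc ‖T ((T ^ n) h)‖ ≤ ‖T‖ * ‖(T ^ n) h‖ := T.le_opNorm _
      _ ≤ 1 * ‖(T ^ n) h‖ := by
          apply mul_le_mul_of_nonneg_right hT (norm_nonneg _)
      _ = ‖(T ^ n) h‖ := one_mul _
  have hbdd : BddBelow (Set.range fun n : ℕ => (‖(T ^ n) h‖ ^ 2 : ℝ)) := by
    refine ⟨0, fun x hx => ?_⟩
    obtain ⟨n, rfl⟩ := hx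
    positivity
  have hlim : Tendsto (fun n : ℕ => (‖(T ^ n) h‖ ^ 2 : ℝ)) atTop
      (nhds (⨅ n : ℕ, (‖(T ^ n) h‖ ^ 2 : ℝ))) := tendsto_atTop_ciInf hanti hbdd
  set L : ℝ := ⨅ n : ℕ, (‖(T ^ n) h‖ ^ 2 : ℝ) with hL
  have hinner : ∀ n : ℕ, ⟪((adjoint T) ^ n * T ^ n) h, h⟫ = ((‖(T ^ n) h‖ ^ 2 : ℝ) : ℂ) := by
    intro n
    rw [← star_eq_adjoint, ← star_pow, mul_apply_eq_comp, star_eq_adjoint, adjoint_inner_left,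
      inner_self_eq_norm_sq_to_K]
    norm_cast
  have hc1 : Tendsto (fun n : ℕ => ⟪((adjoint T) ^ n * T ^ n) h, h⟫) atTop (nhds ⟪S h, h⟫) :=
    (hS h).inner tendsto_const_nhds
  have hc2 : Tendsto (fun n : ℕ => ⟪((adjoint T) ^ n * T ^ n) h, h⟫) atTop (nhds ((L : ℝ) : ℂ)) := by
    simp only [hinner]
    exact (Complex.continuous_ofReal.continuousAt).tendsto.comp hlim
  have hSL : ⟪S h, h⟫ = ((L : ℝ) : ℂ) := tendsto_nhds_unique hc1 hc2
  have hre : Complex.re ⟪S h, h⟫ = L := by rw [hSL]; simp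
  refine ⟨hre ▸ hlim, by rw [hre, hSL], ?_, ?_⟩
  · rw [hre]
    apply le_ciInf
    intro n; positivity
  · rw [hre]
    apply ciInf_le_of_le hbdd 0
    simpa using pow_le_pow_left₀ (norm_nonneg _) (hbd 0) 2

/-- uniform Z-domination of all powers `Tⁿ` by `T'ⁿ` yields inequalities
between the asymptotic limits `S_T`, `S_{T'}`; here `‖S_T^{1/2}h‖ = √(re⟪S_T h, h⟫)` and
`‖(I-S_T)^{1/2}h‖² = re⟪(I-S_T)h, h⟫`. -/
theorem asymptotic_limits_of_uniform_z_domination {H : Type*} [NormedAddCommGroup H]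
    [InnerProductSpace ℂ H] [CompleteSpace H] (T T' : H →L[ℂ] H)
    (hT : ‖T‖ ≤ 1) (hT' : ‖T'‖ ≤ 1) (c : ℝ) (hc : 1 ≤ c)
    (S S' : H →L[ℂ] H)
    (hS : ∀ h : H, Tendsto (fun n : ℕ => ((adjoint T) ^ n * T ^ n) h) atTop (nhds (S h)))
    (hS' : ∀ h : H, Tendsto (fun n : ℕ => ((adjoint T') ^ n * T' ^ n) h) atTop (nhds (S' h)))
    (hZ : ∀ n : ℕ, 1 ≤ n → ∀ h : H,
      ‖(T ^ n - T' ^ n) h‖ ^ 2 + (‖h‖ ^ 2 - ‖(T ^ n) h‖ ^ 2) ≤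
        c ^ 2 * (‖h‖ ^ 2 - ‖(T' ^ n) h‖ ^ 2)) :
    (∀ h : H,
      |Real.sqrt (Complex.re ⟪S h, h⟫) - Real.sqrt (Complex.re ⟪S' h, h⟫)| ^ 2 +
        Complex.re ⟪((1 : H →L[ℂ] H) - S) h, h⟫ ≤
        c ^ 2 * Complex.re ⟪((1 : H →L[ℂ] H) - S') h, h⟫) ∧
    (∀ h : H, ‖h‖ = 1 →
      (1 / 4) * ‖⟪(S - S') h, h⟫‖ ^ 2 ≤
        c ^ 2 * Complex.re ⟪((1 : H →L[ℂ] H) - S') h, h⟫) := by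
  have main : ∀ h : H,
      |Real.sqrt (Complex.re ⟪S h, h⟫) - Real.sqrt (Complex.re ⟪S' h, h⟫)| ^ 2 +
        Complex.re ⟪((1 : H →L[ℂ] H) - S) h, h⟫ ≤
        c ^ 2 * Complex.re ⟪((1 : H →L[ℂ] H) - S') h, h⟫ := by
    intro h
    obtain ⟨hlim, hS0c, h0, _⟩ := my_aux T hT S hS h
    obtain ⟨hlim', hS0c', h0', _⟩ := my_aux T' hT' S' hS' h
    set s := Complex.re ⟪S h, h⟫
    set s' := Complex.re ⟪S' h, h⟫
    have hres : Complex.re ⟪((1 : H →L[ℂ] H) - S) h, h⟫ = ‖h‖ ^ 2 - s := by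
      rw [sub_apply, one_apply_eq_self, inner_sub_left, inner_self_eq_norm_sq_to_K, hS0c]
      norm_cast
    have hres' : Complex.re ⟪((1 : H →L[ℂ] H) - S') h, h⟫ = ‖h‖ ^ 2 - s' := by
      rw [sub_apply, one_apply_eq_self, inner_sub_left, inner_self_eq_norm_sq_to_K, hS0c']
      norm_cast
    rw [hres, hres']
    -- norms tend to sqrt
    have ha : Tendsto (fun n : ℕ => ‖(T ^ n) h‖) atTop (nhds (Real.sqrt s)) := by
      have h1 := (Real.continuous_sqrt.tendsto s).comp hlim
      exact h1.congr fun n => Real.sqrt_sq (norm_nonneg _)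
    have hb : Tendsto (fun n : ℕ => ‖(T' ^ n) h‖) atTop (nhds (Real.sqrt s')) := by
      have h1 := (Real.continuous_sqrt.tendsto s').comp hlim'
      exact h1.congr fun n => Real.sqrt_sq (norm_nonneg _)
    have hf : Tendsto (fun n : ℕ =>
        |‖(T ^ n) h‖ - ‖(T' ^ n) h‖| ^ 2 + (‖h‖ ^ 2 - ‖(T ^ n) h‖ ^ 2)) atTop
        (nhds (|Real.sqrt s - Real.sqrt s'| ^ 2 + (‖h‖ ^ 2 - s))) :=
      (((ha.sub hb).abs.pow 2).add (tendsto_const_nhds.sub hlim))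
    have hg : Tendsto (fun n : ℕ => c ^ 2 * (‖h‖ ^ 2 - ‖(T' ^ n) h‖ ^ 2)) atTop
        (nhds (c ^ 2 * (‖h‖ ^ 2 - s'))) :=
      tendsto_const_nhds.mul (tendsto_const_nhds.sub hlim')
    refine le_of_tendsto_of_tendsto hf hg ?_
    filter_upwards [eventually_ge_atTop 1] with n hn
    have h1 := hZ n hn h
    have h2 : |‖(T ^ n) h‖ - ‖(T' ^ n) h‖| ^ 2 ≤ ‖(T ^ n - T' ^ n) h‖ ^ 2 := by
      rw [sq_abs]
      apply sq_le_sq'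
      · rw [neg_le, neg_sub]
        calc ‖(T' ^ n) h‖ - ‖(T ^ n) h‖ ≤ ‖(T' ^ n) h - (T ^ n) h‖ := norm_sub_norm_le _ _
          _ = ‖(T ^ n - T' ^ n) h‖ := by rw [← norm_neg]; congr 1; simp
      · calc ‖(T ^ n) h‖ - ‖(T' ^ n) h‖ ≤ ‖(T ^ n) h - (T' ^ n) h‖ := norm_sub_norm_le _ _
          _ = ‖(T ^ n - T' ^ n) h‖ := by simp
    linarith
  refine ⟨main, fun h hh => ?_⟩
  obtain ⟨hlim, hS0, h0, hle⟩ := my_aux T hT S hS h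
  obtain ⟨hlim', hS0', h0', hle'⟩ := my_aux T' hT' S' hS' h
  set s := Complex.re ⟪S h, h⟫
  set s' := Complex.re ⟪S' h, h⟫
  have hdiff : ⟪(S - S') h, h⟫ = ((s - s' : ℝ) : ℂ) := by
    rw [sub_apply, inner_sub_left, hS0, hS0']
    push_cast
    ring
  have hnorm : ‖⟪(S - S') h, h⟫‖ = |s - s'| := by
    rw [hdiff, Complex.norm_real, Real.norm_eq_abs]
  have hs1 : s ≤ 1 := by rw [hh] at hle; simpa using hle
  have hs1' : s' ≤ 1 := by rw [hh] at hle'; simpa using hle'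
  have hsq : Real.sqrt s ≤ 1 := Real.sqrt_le_one.mpr hs1
  have hsq' : Real.sqrt s' ≤ 1 := Real.sqrt_le_one.mpr hs1'
  have hfac : |s - s'| ≤ 2 * |Real.sqrt s - Real.sqrt s'| := by
    have : s - s' = (Real.sqrt s - Real.sqrt s') * (Real.sqrt s + Real.sqrt s') := by
      have e1 : Real.sqrt s ^ 2 = s := Real.sq_sqrt h0
      have e2 : Real.sqrt s' ^ 2 = s' := Real.sq_sqrt h0'
      nlinarith
    rw [this, abs_mul]
    have h2 : |Real.sqrt s + Real.sqrt s'| ≤ 2 := by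
      rw [abs_of_nonneg (by positivity)]; linarith
    calc |Real.sqrt s - Real.sqrt s'| * |Real.sqrt s + Real.sqrt s'|
        ≤ |Real.sqrt s - Real.sqrt s'| * 2 := by
          apply mul_le_mul_of_nonneg_left h2 (abs_nonneg _)
      _ = 2 * |Real.sqrt s - Real.sqrt s'| := by ring
  have hmain := main h
  have hreS : Complex.re ⟪((1 : H →L[ℂ] H) - S) h, h⟫ = ‖h‖ ^ 2 - s := by
    rw [sub_apply, one_apply_eq_self, inner_sub_left, inner_self_eq_norm_sq_to_K, hS0]
    norm_cast
  have hnn : 0 ≤ Complex.re ⟪((1 : H →L[ℂ] H) - S) h, h⟫ := by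
    rw [hreS, hh]; simpa using hs1
  have key : (1 / 4) * |s - s'| ^ 2 ≤ |Real.sqrt s - Real.sqrt s'| ^ 2 := by
    nlinarith [abs_nonneg (s - s'), abs_nonneg (Real.sqrt s - Real.sqrt s')]
  rw [hnorm]
  linarith
end

section
/- Let A, A' be positive contractions on H such that I - A² ≤ c(I - A'²) for some constant c > 0. Then A is Z-dominated by A': there exists c' > 0 with ‖D_A h‖ ≤ c'‖D_{A'}h‖ and ‖(A' - A)h‖ ≤ c'‖D_{A'}h‖ for all h ∈ H. -/
open ContinuousLinearMap

local notation "⟪" x ", " y "⟫" => @inner ℂ _ _ x y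

private lemma zdom_key_re {H : Type*} [NormedAddCommGroup H] [InnerProductSpace ℂ H]
    [CompleteSpace H] (A : H →L[ℂ] H) (hA : IsSelfAdjoint A) (h : H) :
    Complex.re ⟪((1 : H →L[ℂ] H) - A * A) h, h⟫ = ‖h‖ ^ 2 - ‖A h‖ ^ 2 := by
  have h1 : ⟪(A * A) h, h⟫ = ⟪A h, A h⟫ := by
    show ⟪A (A h), h⟫ = _
    nth_rewrite 1 [← hA.adjoint_eq]
    exact ContinuousLinearMap.adjoint_inner_left A h (A h)
  rw [ContinuousLinearMap.sub_apply, inner_sub_left, (show (1 : H →L[ℂ] H) h = h from rfl), h1, Complex.sub_re]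
  congr 1
  · exact_mod_cast inner_self_eq_norm_sq (𝕜 := ℂ) h
  · exact_mod_cast inner_self_eq_norm_sq (𝕜 := ℂ) (A h)

private lemma zdom_key_sub {H : Type*} [NormedAddCommGroup H] [InnerProductSpace ℂ H]
    [CompleteSpace H] (A : H →L[ℂ] H) (hA : A.IsPositive) (hAn : ‖A‖ ≤ 1) (h : H) :
    ‖h - A h‖ ^ 2 ≤ ‖h‖ ^ 2 - ‖A h‖ ^ 2 := by
  have hA0 : (0 : H →L[ℂ] H) ≤ A := (ContinuousLinearMap.nonneg_iff_isPositive A).mpr hA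
  have hA1 : A ≤ 1 := (CStarAlgebra.norm_le_one_iff_of_nonneg A hA0).mp hAn
  have hpow := CStarAlgebra.pow_antitone hA0 hA1 (by norm_num : (1:ℕ) ≤ 2)
  simp only [pow_one, pow_two] at hpow
  have hpos : (A - A * A).IsPositive := by
    rw [← ContinuousLinearMap.nonneg_iff_isPositive]
    simpa using sub_nonneg.mpr hpow
  have h2 : 0 ≤ Complex.re ⟪(A - A * A) h, h⟫ := (Complex.nonneg_iff.mp (hpos.inner_nonneg_left h)).1
  have h3 : Complex.re ⟪(A - A * A) h, h⟫ = Complex.re ⟪A h, h⟫ - ‖A h‖ ^ 2 := by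
    have h1 : ⟪(A * A) h, h⟫ = ⟪A h, A h⟫ := by
      show ⟪A (A h), h⟫ = _
      nth_rewrite 1 [← hA.isSelfAdjoint.adjoint_eq]
      exact ContinuousLinearMap.adjoint_inner_left A h (A h)
    rw [ContinuousLinearMap.sub_apply, inner_sub_left, h1, Complex.sub_re]
    congr 1
    exact_mod_cast inner_self_eq_norm_sq (𝕜 := ℂ) (A h)
  have h5 : ‖h - A h‖ ^ 2 = ‖h‖ ^ 2 - 2 * Complex.re ⟪A h, h⟫ + ‖A h‖ ^ 2 := by
    rw [@norm_sub_sq ℂ]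
    congr 1
    rw [inner_re_symm]
    rfl
  nlinarith

/-- for positive contractions `A, A'`, the Loewner inequality
`I - A² ≤ c(I - A'²)` implies that `A` is Z-dominated by `A'`
(here `‖D_A h‖ = √(‖h‖² - ‖Ah‖²)` since `A* = A`). -/
theorem z_domination_of_positive_contractions {H : Type*} [NormedAddCommGroup H]
    [InnerProductSpace ℂ H] [CompleteSpace H] (A A' : H →L[ℂ] H)
    (hA : A.IsPositive) (hA' : A'.IsPositive) (hAn : ‖A‖ ≤ 1) (hA'n : ‖A'‖ ≤ 1)
    (c : ℝ) (hc : 0 < c)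
    (hloew : ∀ h : H, Complex.re ⟪((1 : H →L[ℂ] H) - A * A) h, h⟫ ≤
      c * Complex.re ⟪((1 : H →L[ℂ] H) - A' * A') h, h⟫) :
    ∃ c' : ℝ, 0 < c' ∧
      (∀ h : H, Real.sqrt (‖h‖ ^ 2 - ‖A h‖ ^ 2) ≤ c' * Real.sqrt (‖h‖ ^ 2 - ‖A' h‖ ^ 2)) ∧
      (∀ h : H, ‖(A' - A) h‖ ≤ c' * Real.sqrt (‖h‖ ^ 2 - ‖A' h‖ ^ 2)) := by
  have hloew' : ∀ h : H, ‖h‖ ^ 2 - ‖A h‖ ^ 2 ≤ c * (‖h‖ ^ 2 - ‖A' h‖ ^ 2) := by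
    intro h
    have := hloew h
    rwa [zdom_key_re A hA.isSelfAdjoint h, zdom_key_re A' hA'.isSelfAdjoint h] at this
  refine ⟨Real.sqrt c + 1, by positivity, ?_, ?_⟩
  · intro h
    calc Real.sqrt (‖h‖ ^ 2 - ‖A h‖ ^ 2) ≤ Real.sqrt (c * (‖h‖ ^ 2 - ‖A' h‖ ^ 2)) :=
          Real.sqrt_le_sqrt (hloew' h)
      _ = Real.sqrt c * Real.sqrt (‖h‖ ^ 2 - ‖A' h‖ ^ 2) := Real.sqrt_mul hc.le _
      _ ≤ (Real.sqrt c + 1) * Real.sqrt (‖h‖ ^ 2 - ‖A' h‖ ^ 2) := by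
          have := Real.sqrt_nonneg (‖h‖ ^ 2 - ‖A' h‖ ^ 2)
          nlinarith
  · intro h
    have k1 : ‖h - A h‖ ^ 2 ≤ ‖h‖ ^ 2 - ‖A h‖ ^ 2 := zdom_key_sub A hA hAn h
    have k2 : ‖h - A' h‖ ^ 2 ≤ ‖h‖ ^ 2 - ‖A' h‖ ^ 2 := zdom_key_sub A' hA' hA'n h
    have s2 : ‖h - A' h‖ ≤ Real.sqrt (‖h‖ ^ 2 - ‖A' h‖ ^ 2) := by
      rw [← Real.sqrt_sq (norm_nonneg (h - A' h))]
      exact Real.sqrt_le_sqrt k2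
    have s1 : ‖h - A h‖ ≤ Real.sqrt c * Real.sqrt (‖h‖ ^ 2 - ‖A' h‖ ^ 2) := by
      rw [← Real.sqrt_sq (norm_nonneg (h - A h)), ← Real.sqrt_mul hc.le]
      exact Real.sqrt_le_sqrt (by nlinarith [hloew' h])
    calc ‖(A' - A) h‖ = ‖(h - A h) - (h - A' h)‖ := by
          congr 1
          rw [ContinuousLinearMap.sub_apply]
          abel
      _ ≤ ‖h - A h‖ + ‖h - A' h‖ := norm_sub_le _ _
      _ ≤ Real.sqrt c * Real.sqrt (‖h‖ ^ 2 - ‖A' h‖ ^ 2) + Real.sqrt (‖h‖ ^ 2 - ‖A' h‖ ^ 2) := by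
          gcongr
      _ = (Real.sqrt c + 1) * Real.sqrt (‖h‖ ^ 2 - ‖A' h‖ ^ 2) := by ring
end
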